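/- Let D = diag(d_1,…,d_n) with d_i > 0 and v ∈ ℝ^{2n}, and A = [[0,D],[−D,0]]. The pair (A, v) is controllable (i.e., [v | Av | … | A^{2n−1}v] is invertible) if and only if the d_i are pairwise distinct and v_l² + v_{n+l}² > 0 for every l = 1,…,n. -/

import Mathlib

noncomputable section
open Matrix Polynomial Complex

/-- The block matrix `A = [[0, D], [-D, 0]]`. -/
def AmatD {n : ℕ} (d : Fin n → ℝ) : Matrix (Fin n ⊕ Fin n) (Fin n ⊕ Fin n) ℝ :=
  Matrix.fromBlocks 0 (Matrix.diagonal d) (-(Matrix.diagonal d)) 0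

/-- The controllability matrix `[v | Av | A²v | … | A^{2n-1}v]` of `(A, v)`. -/
def ctrlMat {n : ℕ} (d : Fin n → ℝ) (v : Fin n ⊕ Fin n → ℝ) :
    Matrix (Fin n ⊕ Fin n) (Fin n ⊕ Fin n) ℝ :=
  Matrix.of fun i j => ((AmatD d ^ ((finSumFinEquiv j : Fin (n + n)) : ℕ)) *ᵥ v) i

variable {n : ℕ}

def Ac (d : Fin n → ℝ) : Matrix (Fin n ⊕ Fin n) (Fin n ⊕ Fin n) ℂ :=
  Matrix.fromBlocks 0 (Matrix.diagonal fun l => (d l : ℂ))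
    (-(Matrix.diagonal fun l => (d l : ℂ))) 0

lemma Ac_eq_map (d : Fin n → ℝ) : Ac d = (AmatD d).map (Complex.ofReal) := by
  simp [Ac, AmatD, Matrix.fromBlocks_map, Matrix.diagonal_map, Function.comp]

lemma mulVec_Ac_inl (d : Fin n → ℝ) (u : Fin n ⊕ Fin n → ℂ) (l : Fin n) :
    (Ac d *ᵥ u) (Sum.inl l) = d l * u (Sum.inr l) := by
  simp [Ac, mulVec, dotProduct, Fintype.sum_sum_type, fromBlocks, diagonal,
    Finset.mul_sum, ite_mul, Finset.sum_ite_eq]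

lemma mulVec_Ac_inr (d : Fin n → ℝ) (u : Fin n ⊕ Fin n → ℂ) (l : Fin n) :
    (Ac d *ᵥ u) (Sum.inr l) = -(d l * u (Sum.inl l)) := by
  simp [Ac, mulVec, dotProduct, Fintype.sum_sum_type, fromBlocks, diagonal,
    Finset.mul_sum, ite_mul, Finset.sum_ite_eq]

lemma key_sub (d : Fin n → ℝ) (u : Fin n ⊕ Fin n → ℂ) (k : ℕ) (l : Fin n) :
    (Ac d ^ k *ᵥ u) (Sum.inl l) - I * (Ac d ^ k *ᵥ u) (Sum.inr l)
      = (I * d l) ^ k * (u (Sum.inl l) - I * u (Sum.inr l)) := by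
  induction k with
  | zero => simp
  | succ k ih =>
      rw [pow_succ', ← Matrix.mulVec_mulVec, mulVec_Ac_inl, mulVec_Ac_inr, pow_succ']
      rw [show ((d l : ℂ) * (Ac d ^ k *ᵥ u) (Sum.inr l) -
          I * -((d l : ℂ) * (Ac d ^ k *ᵥ u) (Sum.inl l))) =
          (I * d l) * ((Ac d ^ k *ᵥ u) (Sum.inl l) - I * (Ac d ^ k *ᵥ u) (Sum.inr l)) by
        ring_nf; rw [Complex.I_sq]; ring]
      rw [ih]; ring

lemma key_add (d : Fin n → ℝ) (u : Fin n ⊕ Fin n → ℂ) (k : ℕ) (l : Fin n) :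
    (Ac d ^ k *ᵥ u) (Sum.inl l) + I * (Ac d ^ k *ᵥ u) (Sum.inr l)
      = (-(I * d l)) ^ k * (u (Sum.inl l) + I * u (Sum.inr l)) := by
  induction k with
  | zero => simp
  | succ k ih =>
      rw [pow_succ', ← Matrix.mulVec_mulVec, mulVec_Ac_inl, mulVec_Ac_inr, pow_succ']
      rw [show ((d l : ℂ) * (Ac d ^ k *ᵥ u) (Sum.inr l) +
          I * -((d l : ℂ) * (Ac d ^ k *ᵥ u) (Sum.inl l))) =
          (-(I * d l)) * ((Ac d ^ k *ᵥ u) (Sum.inl l) + I * (Ac d ^ k *ᵥ u) (Sum.inr l)) by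
        ring_nf; rw [Complex.I_sq]; ring]
      rw [ih]; ring

lemma map_pow' (d : Fin n → ℝ) (m : ℕ) :
    (AmatD d ^ m).map Complex.ofReal = Ac d ^ m := by
  have h := map_pow (Complex.ofRealHom.mapMatrix (m := Fin n ⊕ Fin n)) (AmatD d) m
  simp only [RingHom.mapMatrix_apply] at h
  rw [Ac_eq_map]
  exact h

lemma Mc_apply (d : Fin n → ℝ) (v : Fin n ⊕ Fin n → ℝ) (i j : Fin n ⊕ Fin n) :
    ((ctrlMat d v).map Complex.ofReal) i j
      = (Ac d ^ ((finSumFinEquiv j : Fin (n + n)) : ℕ) *ᵥ (fun i => (v i : ℂ))) i := by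
  have h := Complex.ofRealHom.map_mulVec (AmatD d ^ ((finSumFinEquiv j : Fin (n + n)) : ℕ)) v i
  simp only [Matrix.map_apply, ctrlMat, Matrix.of_apply]
  have he : ⇑Complex.ofRealHom = Complex.ofReal := rfl
  rw [he] at h
  exact h.trans (by rw [map_pow']; rfl)

def muv (d : Fin n → ℝ) : Fin n ⊕ Fin n → ℂ :=
  Sum.elim (fun l => I * d l) (fun l => -(I * d l))

def cvec (v : Fin n ⊕ Fin n → ℝ) : Fin n ⊕ Fin n → ℂ :=
  Sum.elim (fun l => (v (Sum.inl l) : ℂ) - I * v (Sum.inr l))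
    (fun l => (v (Sum.inl l) : ℂ) + I * v (Sum.inr l))

def Pmat (n : ℕ) : Matrix (Fin n ⊕ Fin n) (Fin n ⊕ Fin n) ℂ :=
  Matrix.fromBlocks 1 ((-I) • 1) 1 (I • 1)

lemma factor (d : Fin n → ℝ) (v : Fin n ⊕ Fin n → ℝ) :
    Pmat n * ((ctrlMat d v).map Complex.ofReal)
      = Matrix.diagonal (cvec v) *
        ((Matrix.vandermonde (muv d ∘ finSumFinEquiv.symm)).submatrix
          finSumFinEquiv finSumFinEquiv) := by
  ext i j
  have hL : ∀ x, (Pmat n * ((ctrlMat d v).map Complex.ofReal)) x j =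
      ∑ y, Pmat n x y * ((ctrlMat d v).map Complex.ofReal) y j := fun x => Matrix.mul_apply
  rw [Matrix.mul_apply, Matrix.diagonal_mul]
  cases i with
  | inl l =>
      rw [show (∑ y, Pmat n (Sum.inl l) y * ((ctrlMat d v).map Complex.ofReal) y j) =
          ((ctrlMat d v).map Complex.ofReal) (Sum.inl l) j
            + (-I) * ((ctrlMat d v).map Complex.ofReal) (Sum.inr l) j by
        simp [Pmat, Fintype.sum_sum_type, Matrix.fromBlocks, Matrix.one_apply,
          ite_mul, Finset.sum_ite_eq]]
      rw [Mc_apply, Mc_apply]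
      rw [show ((Ac d ^ ((finSumFinEquiv j : Fin (n+n)) : ℕ) *ᵥ fun i => (v i : ℂ)) (Sum.inl l)
          + (-I) * (Ac d ^ ((finSumFinEquiv j : Fin (n+n)) : ℕ) *ᵥ fun i => (v i : ℂ)) (Sum.inr l))
          = ((Ac d ^ ((finSumFinEquiv j : Fin (n+n)) : ℕ) *ᵥ fun i => (v i : ℂ)) (Sum.inl l)
          - I * (Ac d ^ ((finSumFinEquiv j : Fin (n+n)) : ℕ) *ᵥ fun i => (v i : ℂ)) (Sum.inr l))
          by ring]
      rw [key_sub]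
      simp only [Matrix.submatrix_apply, Matrix.vandermonde_apply, Function.comp_apply,
        Equiv.symm_apply_apply, muv, cvec, Sum.elim_inl]
      ring
  | inr l =>
      rw [show (∑ y, Pmat n (Sum.inr l) y * ((ctrlMat d v).map Complex.ofReal) y j) =
          ((ctrlMat d v).map Complex.ofReal) (Sum.inl l) j
            + I * ((ctrlMat d v).map Complex.ofReal) (Sum.inr l) j by
        simp [Pmat, Fintype.sum_sum_type, Matrix.fromBlocks, Matrix.one_apply,
          ite_mul, Finset.sum_ite_eq]]
      rw [Mc_apply, Mc_apply, key_add]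
      simp only [Matrix.submatrix_apply, Matrix.vandermonde_apply, Function.comp_apply,
        Equiv.symm_apply_apply, muv, cvec, Sum.elim_inr]
      ring

lemma detP_ne_zero : (Pmat n).det ≠ 0 := by
  rw [Pmat, Matrix.det_fromBlocks_one₁₁]
  have : (I • (1 : Matrix (Fin n) (Fin n) ℂ) - 1 * ((-I) • 1))
      = (2 * I) • (1 : Matrix (Fin n) (Fin n) ℂ) := by
    rw [one_mul]
    ext a b
    simp [Matrix.one_apply]
    split <;> ring
  rw [this, Matrix.smul_one_eq_diagonal, Matrix.det_diagonal]
  simp [Complex.I_ne_zero]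

lemma cvec_aux (x y : ℝ) : ((x : ℂ) - I * y ≠ 0) ↔ 0 < x ^ 2 + y ^ 2 := by
  constructor
  · intro h
    rcases lt_or_eq_of_le (by positivity : (0:ℝ) ≤ x ^ 2 + y ^ 2) with h1 | h1
    · exact h1
    · exfalso
      have hx : x = 0 := by nlinarith [sq_nonneg x, sq_nonneg y]
      have hy : y = 0 := by nlinarith [sq_nonneg x, sq_nonneg y]
      exact h (by simp [hx, hy])
  · intro h hz
    rw [Complex.ext_iff] at hz
    simp at hz
    nlinarith [hz.1, hz.2]

lemma cvec_aux' (x y : ℝ) : ((x : ℂ) + I * y ≠ 0) ↔ 0 < x ^ 2 + y ^ 2 := by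
  have h := cvec_aux x (-y)
  rw [show ((x : ℂ) - I * ((-y : ℝ) : ℂ)) = (x : ℂ) + I * y by push_cast; ring] at h
  rw [h, neg_sq]

lemma muv_inj_iff (d : Fin n → ℝ) (hd : ∀ i, 0 < d i) :
    Function.Injective (muv d) ↔ Function.Injective d := by
  constructor
  · intro h a b hab
    have : muv d (Sum.inl a) = muv d (Sum.inl b) := by simp [muv, hab]
    exact Sum.inl_injective (h this)
  · intro h x y hxy
    have hIne : (I : ℂ) ≠ 0 := Complex.I_ne_zero
    cases x with
    | inl a =>
        cases y with
        | inl b =>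
            simp only [muv, Sum.elim_inl] at hxy
            have : (d a : ℂ) = d b := mul_left_cancel₀ hIne hxy
            exact congrArg Sum.inl (h (by exact_mod_cast this))
        | inr b =>
            exfalso
            simp only [muv, Sum.elim_inl, Sum.elim_inr, ← mul_neg] at hxy
            have : (d a : ℂ) = -(d b : ℂ) := mul_left_cancel₀ hIne hxy
            have : d a = -(d b) := by exact_mod_cast this
            nlinarith [hd a, hd b]
    | inr a =>
        cases y with
        | inl b =>
            exfalso
            simp only [muv, Sum.elim_inl, Sum.elim_inr, ← mul_neg] at hxy
            have : -(d a : ℂ) = (d b : ℂ) := mul_left_cancel₀ hIne hxy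
            have : -(d a) = d b := by exact_mod_cast this
            nlinarith [hd a, hd b]
        | inr b =>
            simp only [muv, Sum.elim_inr, ← mul_neg] at hxy
            have : -(d a : ℂ) = -(d b : ℂ) := mul_left_cancel₀ hIne hxy
            have : d a = d b := by
              have := neg_injective this
              exact_mod_cast this
            exact congrArg Sum.inr (h this)

/-- `(A, v)` is controllable iff the `dᵢ` are pairwise distinct and
`vₗ² + v_{n+l}² > 0` for every `l`. -/
theorem ctrlMat_isUnit_iff {n : ℕ} (d : Fin n → ℝ) (hd : ∀ i, 0 < d i)
    (v : Fin n ⊕ Fin n → ℝ) :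
    IsUnit (ctrlMat d v) ↔
      Function.Injective d ∧ ∀ l : Fin n, 0 < v (Sum.inl l) ^ 2 + v (Sum.inr l) ^ 2 := by
  rw [Matrix.isUnit_iff_isUnit_det, isUnit_iff_ne_zero]
  have hdetmap : ((ctrlMat d v).map Complex.ofReal).det
      = Complex.ofReal ((ctrlMat d v).det) :=
    (RingHom.map_det Complex.ofRealHom (ctrlMat d v)).symm
  have h1 : (ctrlMat d v).det ≠ 0 ↔ ((ctrlMat d v).map Complex.ofReal).det ≠ 0 := by
    rw [hdetmap]; simp
  rw [h1]
  have hfac := congrArg Matrix.det (factor d v)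
  rw [Matrix.det_mul, Matrix.det_mul, Matrix.det_diagonal,
    Matrix.det_submatrix_equiv_self] at hfac
  have h2 : ((ctrlMat d v).map Complex.ofReal).det ≠ 0 ↔
      (∏ i, cvec v i) * (Matrix.vandermonde (muv d ∘ finSumFinEquiv.symm)).det ≠ 0 := by
    constructor
    · intro h hz
      rw [hz] at hfac
      exact (mul_ne_zero detP_ne_zero h) hfac
    · intro h
      intro hz
      rw [hz, mul_zero] at hfac
      exact h hfac.symm
  rw [h2, mul_ne_zero_iff, Matrix.det_vandermonde_ne_zero_iff]
  have h3 : Function.Injective (muv d ∘ finSumFinEquiv.symm) ↔ Function.Injective d := by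
    rw [← muv_inj_iff d hd]
    constructor
    · intro h
      have hcomp : (muv d ∘ ⇑finSumFinEquiv.symm) ∘ ⇑finSumFinEquiv = muv d := by
        ext i; simp
      have := h.comp finSumFinEquiv.injective
      rwa [hcomp] at this
    · exact fun h => h.comp finSumFinEquiv.symm.injective
  have h4 : (∏ i, cvec v i) ≠ 0 ↔
      ∀ l : Fin n, 0 < v (Sum.inl l) ^ 2 + v (Sum.inr l) ^ 2 := by
    rw [Finset.prod_ne_zero_iff]
    constructor
    · intro h l
      have := h (Sum.inl l) (Finset.mem_univ _)
      rw [cvec, Sum.elim_inl, cvec_aux] at this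
      exact this
    · intro h i _
      cases i with
      | inl l => rw [cvec, Sum.elim_inl, cvec_aux]; exact h l
      | inr l => rw [cvec, Sum.elim_inr, cvec_aux']; exact h l
  rw [h4, h3]
  exact and_comm
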